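/- Gauge invariance of the effective affinities (Theorem 'gauge'): Let a : Fin n → ℝ and define the gauge-transformed generator W' := W * Matrix.diagonal (fun j => Real.exp (−a j)), so that W' i j = W i j * Real.exp (−a j) for all i, j. Then: (i) W' is a MJPG with W' i_μ j_μ > 0 and W' j_μ i_μ > 0 for all μ; (ii) the hidden generator of W' (obtained from W' by the same edge-removal construction) equals W_hid * Matrix.diagonal (fun j => Real.exp (−a j)); (iii) the vector p' defined by p' i := Real.exp (a i) * p i / (∑ k, Real.exp (a k) * p k) is strictly positive, sums to 1, and is annihilated by the hidden generator of W'; and (iv) the effective affinities are invariant: for every μ, Real.log (W' i_μ j_μ * p' j_μ / (W' j_μ i_μ * p' i_μ)) = Q μ. -/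

import Mathlib

open Matrix

/-- Gauge invariance of the effective affinities (Theorem "gauge"). -/
theorem gauge_invariance_effective_affinities {n m : ℕ}
    (W Whid : Matrix (Fin n) (Fin n) ℝ)
    (hW1 : ∀ i j, i ≠ j → 0 ≤ W i j)
    (hW2 : ∀ j, ∑ i, W i j = 0)
    (ei ej : Fin m → Fin n)
    (hij : ∀ μ, ei μ ≠ ej μ)
    (hdist : ∀ μ ν, μ ≠ ν → ({ei μ, ej μ} : Finset (Fin n)) ≠ {ei ν, ej ν})
    (hpos1 : ∀ μ, 0 < W (ei μ) (ej μ))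
    (hpos2 : ∀ μ, 0 < W (ej μ) (ei μ))
    (hH1 : ∀ μ, Whid (ei μ) (ej μ) = 0)
    (hH2 : ∀ μ, Whid (ej μ) (ei μ) = 0)
    (hH3 : ∀ i, Whid i i = W i i
        + ∑ μ ∈ Finset.univ.filter (fun μ => ej μ = i), W (ei μ) (ej μ)
        + ∑ μ ∈ Finset.univ.filter (fun μ => ei μ = i), W (ej μ) (ei μ))
    (hH4 : ∀ i j, i ≠ j →
      (∀ μ, ¬(i = ei μ ∧ j = ej μ) ∧ ¬(i = ej μ ∧ j = ei μ)) → Whid i j = W i j)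
    (p : Fin n → ℝ) (hp1 : ∀ i, 0 < p i) (hp2 : ∑ i, p i = 1)
    (hp3 : Whid *ᵥ p = 0)
    (Q : Fin m → ℝ)
    (hQ : ∀ μ, Q μ = Real.log (W (ei μ) (ej μ) * p (ej μ) / (W (ej μ) (ei μ) * p (ei μ))))
    (M : (Fin m → ℝ) → Matrix (Fin n) (Fin n) ℝ)
    (hM1 : ∀ q μ, M q (ei μ) (ej μ) = W (ei μ) (ej μ) * Real.exp (-q μ))
    (hM2 : ∀ q μ, M q (ej μ) (ei μ) = W (ej μ) (ei μ) * Real.exp (q μ))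
    (hM3 : ∀ q i j, (∀ μ, ¬(i = ei μ ∧ j = ej μ) ∧ ¬(i = ej μ ∧ j = ei μ)) → M q i j = W i j)
    (g : Fin n → ℝ) :
    ((∀ i j, i ≠ j → 0 ≤ (W * Matrix.diagonal (fun j => Real.exp (-g j))) i j) ∧
     (∀ j, ∑ i, (W * Matrix.diagonal (fun j => Real.exp (-g j))) i j = 0) ∧
     (∀ μ, 0 < (W * Matrix.diagonal (fun j => Real.exp (-g j))) (ei μ) (ej μ)) ∧
     (∀ μ, 0 < (W * Matrix.diagonal (fun j => Real.exp (-g j))) (ej μ) (ei μ))) ∧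
    (∀ Whid' : Matrix (Fin n) (Fin n) ℝ,
      (∀ μ, Whid' (ei μ) (ej μ) = 0) →
      (∀ μ, Whid' (ej μ) (ei μ) = 0) →
      (∀ i, Whid' i i = (W * Matrix.diagonal (fun j => Real.exp (-g j))) i i
        + ∑ μ ∈ Finset.univ.filter (fun μ => ej μ = i),
            (W * Matrix.diagonal (fun j => Real.exp (-g j))) (ei μ) (ej μ)
        + ∑ μ ∈ Finset.univ.filter (fun μ => ei μ = i),
            (W * Matrix.diagonal (fun j => Real.exp (-g j))) (ej μ) (ei μ)) →
      (∀ i j, i ≠ j →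
        (∀ μ, ¬(i = ei μ ∧ j = ej μ) ∧ ¬(i = ej μ ∧ j = ei μ)) →
        Whid' i j = (W * Matrix.diagonal (fun j => Real.exp (-g j))) i j) →
      Whid' = Whid * Matrix.diagonal (fun j => Real.exp (-g j))) ∧
    (∀ p' : Fin n → ℝ,
      (p' = fun i => Real.exp (g i) * p i / ∑ k, Real.exp (g k) * p k) →
      ((∀ i, 0 < p' i) ∧ (∑ i, p' i = 1) ∧
       ((Whid * Matrix.diagonal (fun j => Real.exp (-g j))) *ᵥ p' = 0) ∧
       (∀ μ, Real.log ((W * Matrix.diagonal (fun j => Real.exp (-g j))) (ei μ) (ej μ)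
            * p' (ej μ)
          / ((W * Matrix.diagonal (fun j => Real.exp (-g j))) (ej μ) (ei μ) * p' (ei μ)))
          = Q μ))) := by

  have hS : (0:ℝ) < ∑ k, Real.exp (g k) * p k := by
    have hn : (0:ℝ) < ∑ k, p k := by rw [hp2]; norm_num
    have : ∃ k : Fin n, True := by
      by_contra h
      push_neg at h
      have : ∑ k, p k = 0 := Finset.sum_eq_zero (fun k _ => (h k).elim)
      linarith
    obtain ⟨k0, -⟩ := this
    apply Finset.sum_pos (fun k _ => mul_pos (Real.exp_pos _) (hp1 k))
    exact ⟨k0, Finset.mem_univ k0⟩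
  refine ⟨⟨?_, ?_, ?_, ?_⟩, ?_, ?_⟩
  · intro i j hne
    rw [Matrix.mul_diagonal]
    exact mul_nonneg (hW1 i j hne) (Real.exp_pos _).le
  · intro j
    simp only [Matrix.mul_diagonal]
    rw [← Finset.sum_mul, hW2, zero_mul]
  · intro μ
    rw [Matrix.mul_diagonal]
    exact mul_pos (hpos1 μ) (Real.exp_pos _)
  · intro μ
    rw [Matrix.mul_diagonal]
    exact mul_pos (hpos2 μ) (Real.exp_pos _)
  · intro Whid' h1 h2 h3 h4
    ext i j
    rw [Matrix.mul_diagonal]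
    by_cases hd : i = j
    · subst hd
      rw [h3 i, hH3 i]
      simp only [Matrix.mul_diagonal]
      have A : ∑ μ ∈ Finset.univ.filter (fun μ => ej μ = i),
          W (ei μ) (ej μ) * Real.exp (-g (ej μ))
          = (∑ μ ∈ Finset.univ.filter (fun μ => ej μ = i), W (ei μ) (ej μ)) * Real.exp (-g i) := by
        rw [Finset.sum_mul]
        refine Finset.sum_congr rfl (fun μ hμ => ?_)
        rw [Finset.mem_filter] at hμ
        rw [hμ.2]
      have B : ∑ μ ∈ Finset.univ.filter (fun μ => ei μ = i),
          W (ej μ) (ei μ) * Real.exp (-g (ei μ))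
          = (∑ μ ∈ Finset.univ.filter (fun μ => ei μ = i), W (ej μ) (ei μ)) * Real.exp (-g i) := by
        rw [Finset.sum_mul]
        refine Finset.sum_congr rfl (fun μ hμ => ?_)
        rw [Finset.mem_filter] at hμ
        rw [hμ.2]
      rw [A, B]
      ring
    · by_cases he : ∀ μ, ¬(i = ei μ ∧ j = ej μ) ∧ ¬(i = ej μ ∧ j = ei μ)
      · rw [h4 i j hd he, Matrix.mul_diagonal, hH4 i j hd he]
      · push_neg at he
        obtain ⟨μ, hμ⟩ := he
        by_cases hc : i = ei μ ∧ j = ej μ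
        · obtain ⟨rfl, rfl⟩ := hc
          rw [h1 μ, hH1 μ, zero_mul]
        · have hc2 : i = ej μ ∧ j = ei μ := by tauto
          obtain ⟨rfl, rfl⟩ := hc2
          rw [h2 μ, hH2 μ, zero_mul]
  · intro p' hp'
    have hp'i : ∀ i, p' i = Real.exp (g i) * p i / ∑ k, Real.exp (g k) * p k := by
      intro i; rw [hp']
    refine ⟨?_, ?_, ?_, ?_⟩
    · intro i
      rw [hp'i]
      exact div_pos (mul_pos (Real.exp_pos _) (hp1 i)) hS
    · simp only [hp'i, div_eq_mul_inv, ← Finset.sum_mul]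
      exact mul_inv_cancel₀ (ne_of_gt hS)
    · have key : (Matrix.diagonal (fun j => Real.exp (-g j))) *ᵥ p'
          = (∑ k, Real.exp (g k) * p k)⁻¹ • p := by
        ext i
        simp only [Matrix.mulVec_diagonal, hp'i, Pi.smul_apply, smul_eq_mul]
        rw [Real.exp_neg]
        rw [eq_comm, mul_comm]
        rw [div_eq_mul_inv, mul_assoc (Real.exp (g i)),
          inv_mul_cancel_left₀ (Real.exp_pos (g i)).ne']
      rw [← Matrix.mulVec_mulVec, key, Matrix.mulVec_smul, hp3, smul_zero]
    · intro μ
      rw [hQ]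
      congr 1
      rw [Matrix.mul_diagonal, Matrix.mul_diagonal, hp'i, hp'i]
      have m1 : Real.exp (-g (ej μ)) * Real.exp (g (ej μ)) = 1 := by
        rw [← Real.exp_add]; simp
      have m2 : Real.exp (-g (ei μ)) * Real.exp (g (ei μ)) = 1 := by
        rw [← Real.exp_add]; simp
      have A : W (ei μ) (ej μ) * Real.exp (-g (ej μ))
          * (Real.exp (g (ej μ)) * p (ej μ) / ∑ k, Real.exp (g k) * p k)
          = W (ei μ) (ej μ) * p (ej μ) / ∑ k, Real.exp (g k) * p k := by
        rw [mul_div_assoc']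
        congr 1
        calc W (ei μ) (ej μ) * Real.exp (-g (ej μ)) * (Real.exp (g (ej μ)) * p (ej μ))
            = W (ei μ) (ej μ) * p (ej μ) * (Real.exp (-g (ej μ)) * Real.exp (g (ej μ))) := by ring
          _ = W (ei μ) (ej μ) * p (ej μ) := by rw [m1, mul_one]
      have B : W (ej μ) (ei μ) * Real.exp (-g (ei μ))
          * (Real.exp (g (ei μ)) * p (ei μ) / ∑ k, Real.exp (g k) * p k)
          = W (ej μ) (ei μ) * p (ei μ) / ∑ k, Real.exp (g k) * p k := by
        rw [mul_div_assoc']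
        congr 1
        calc W (ej μ) (ei μ) * Real.exp (-g (ei μ)) * (Real.exp (g (ei μ)) * p (ei μ))
            = W (ej μ) (ei μ) * p (ei μ) * (Real.exp (-g (ei μ)) * Real.exp (g (ei μ))) := by ring
          _ = W (ej μ) (ei μ) * p (ei μ) := by rw [m2, mul_one]
      rw [A, B, div_div_div_comm, div_self hS.ne', div_one]
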